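/- For symmetric positive definite matrices A and B and any matrix X, Γ_{A+B}[X] = Γ_A[X] − Γ_A[B·Γ_{A+B}[X] + Γ_{A+B}[X]·B]. -/

import Mathlib

open Matrix

lemma trace_transpose_mul_self_eq_zero {n : ℕ} {M : Matrix (Fin n) (Fin n) ℝ}
    (h : (Mᵀ * M).trace = 0) : M = 0 := by
  have hsum : (Mᵀ * M).trace = ∑ i, ∑ j, (M j i)^2 := by
    simp [Matrix.trace, Matrix.mul_apply, Matrix.diag, sq]
  rw [hsum] at h
  ext i j
  have := (Finset.sum_eq_zero_iff_of_nonneg (fun i _ => Finset.sum_nonneg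
    (fun j _ => sq_nonneg (M j i)))).mp h j (Finset.mem_univ _)
  have := (Finset.sum_eq_zero_iff_of_nonneg (fun j _ => sq_nonneg (M j _))).mp this i
    (Finset.mem_univ _)
  simpa using pow_eq_zero_iff (n := 2) (by norm_num) |>.mp (this)

lemma trace_transpose_mul_self_nonneg {n : ℕ} (M : Matrix (Fin n) (Fin n) ℝ) :
    0 ≤ (Mᵀ * M).trace := by
  have hsum : (Mᵀ * M).trace = ∑ i, ∑ j, (M j i)^2 := by
    simp [Matrix.trace, Matrix.mul_apply, Matrix.diag, sq]
  rw [hsum]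
  positivity

open scoped MatrixOrder in
lemma sylvester_unique {n : ℕ} {A D : Matrix (Fin n) (Fin n) ℝ} (hA : A.PosDef)
    (h : A * D + D * A = 0) : D = 0 := by
  set S := CFC.sqrt A with hSdef
  have hSS : S * S = A := CFC.sqrt_mul_sqrt_self A hA.posSemidef.nonneg
  have hSt : Sᵀ = S := by
    have : Sᴴ = S := (CFC.sqrt_nonneg A).posSemidef.isHermitian
    rwa [Matrix.conjTranspose_eq_transpose_of_trivial] at this
  have key : ((S*D)ᵀ * (S*D)).trace + ((D*S)ᵀ * (D*S)).trace = 0 := by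
    have h1 : ((S*D)ᵀ * (S*D)).trace = (Dᵀ * (A * D)).trace := by
      rw [Matrix.transpose_mul, hSt]
      rw [← hSS, Matrix.mul_assoc, Matrix.mul_assoc]
    have h2 : ((D*S)ᵀ * (D*S)).trace = (Dᵀ * (D * A)).trace := by
      rw [Matrix.transpose_mul, hSt, ← hSS]
      rw [Matrix.mul_assoc, Matrix.trace_mul_comm S, Matrix.mul_assoc, Matrix.mul_assoc D S S]
    rw [h1, h2, ← Matrix.trace_add, ← Matrix.mul_add, h, Matrix.mul_zero, Matrix.trace_zero]
  have h1z : ((S*D)ᵀ * (S*D)).trace = 0 := by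
    have := trace_transpose_mul_self_nonneg (S*D)
    have := trace_transpose_mul_self_nonneg (D*S)
    linarith
  have hSD : S * D = 0 := trace_transpose_mul_self_eq_zero h1z
  have hAD : A * D = 0 := by rw [← hSS, Matrix.mul_assoc, hSD, Matrix.mul_zero]
  have hdet : IsUnit A.det := isUnit_iff_ne_zero.mpr hA.det_pos.ne'
  calc D = (A⁻¹ * A) * D := by rw [Matrix.nonsing_inv_mul A hdet, Matrix.one_mul]
    _ = 0 := by rw [Matrix.mul_assoc, hAD, Matrix.mul_zero]


/-- `Γ_{A+B}[X] = Γ_A[X] − Γ_A[B·Γ_{A+B}[X] + Γ_{A+B}[X]·B]` for SPD `A`, `B`. -/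
theorem sylvester_add_sol {n : ℕ} (A B X Y W Z : Matrix (Fin n) (Fin n) ℝ)
    (hA : A.PosDef) (hB : B.PosDef)
    (hY : A * Y + Y * A = X)
    (hW : (A + B) * W + W * (A + B) = X)
    (hZ : A * Z + Z * A = B * W + W * B) :
    W = Y - Z := by
  have hW' : A * W + W * A + (B * W + W * B) = X := by rw [← hW]; noncomm_ring
  have h0 : A * (W - (Y - Z)) + (W - (Y - Z)) * A = 0 := by
    have e : A * (W - (Y - Z)) + (W - (Y - Z)) * A =
        (A * W + W * A + (B * W + W * B)) - (A * Y + Y * A) +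
          ((A * Z + Z * A) - (B * W + W * B)) := by noncomm_ring
    rw [e, hW', hY, hZ]
    simp
  have := sylvester_unique hA h0
  rwa [sub_eq_zero] at this
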